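/- Let d = 2, fix λ > 0, and let S : ℝ → ℝ be continuous on [−8λ, 0] with S(0) = 1, |S(z)| < 1 for all z ∈ [−8λ, 0), and S differentiable at 0 with S′(0) = 1. Then there exists a constant C > 0 (depending only on S and λ) such that for every integer K ≥ 2, with Δt = λ/K² and s_k = −4ΔtK²(sin²(π k₁/(2K)) + sin²(π k₂/(2K))), one has Σ_{k ∈ {1,…,K−1}²} 1/(1 − |S(s_k)|) ≤ C·Δt^{−1}·|log(λ^{−1}Δt)|. -/

import Mathlib

open Real

lemma harmonic_le_log : ∀ n : ℕ, 1 ≤ n → ∑ k ∈ Finset.Icc 1 n, (1:ℝ)/k ≤ 1 + Real.log n := by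
  intro n
  induction n with
  | zero => omega
  | succ m ih =>
    intro _
    rcases Nat.eq_or_lt_of_le (Nat.one_le_iff_ne_zero.mpr (Nat.succ_ne_zero m)) with h | h
    · have : m = 0 := by omega
      subst this; norm_num
    · have hm : 1 ≤ m := by omega
      have hm0 : (0:ℝ) < m := by exact_mod_cast hm
      rw [Finset.sum_Icc_succ_top (by omega)]
      have hlog : Real.log ((m:ℝ)/(m+1)) ≤ (m:ℝ)/(m+1) - 1 :=
        Real.log_le_sub_one_of_pos (by positivity)
      have hlog2 : Real.log ((m:ℝ)/(m+1)) = Real.log m - Real.log (m+1) := by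
        rw [Real.log_div (by positivity) (by positivity)]
      have h3 : (1:ℝ)/(m+1) ≤ Real.log (m+1) - Real.log m := by
        have : (m:ℝ)/(m+1) - 1 = -(1/(m+1)) := by field_simp; ring
        rw [hlog2, this] at hlog; linarith
      push_cast
      linarith [ih hm]

lemma inner_sum_le (a : ℝ) (ha : 1 ≤ a) (m : ℕ) :
    ∑ k ∈ Finset.Icc 1 m, 1/(a^2 + (k:ℝ)^2) ≤ 2/a - 2/(a+m) := by
  induction m with
  | zero => simp
  | succ m ih =>
    rw [Finset.sum_Icc_succ_top (by omega)]
    have hm : (0:ℝ) ≤ m := Nat.cast_nonneg m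
    have key : 1/(a^2 + ((m:ℝ)+1)^2) ≤ 2/(a+m) - 2/(a+m+1) := by
      rw [div_sub_div _ _ (by positivity) (by positivity)]
      rw [div_le_div_iff₀ (by positivity) (by positivity)]
      ring_nf
      nlinarith [sq_nonneg (a - ((m:ℝ)+1)), sq_nonneg a]
    have he : a + (↑(m)+1) = a + ↑m + 1 := by ring
    push_cast
    rw [he]
    linarith


lemma stab_bound (lam : ℝ) (hlam : 0 < lam) (S : ℝ → ℝ)
    (hcont : ContinuousOn S (Set.Icc (-(8 * lam)) 0))
    (hS0 : S 0 = 1)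
    (hSlt : ∀ z ∈ Set.Ico (-(8 * lam)) 0, |S z| < 1)
    (hderiv : HasDerivAt S 1 0) :
    ∃ c > 0, ∀ s ∈ Set.Icc (-(8*lam)) 0, c * (-s) ≤ 1 - |S s| := by
  have h1 := hasDerivAt_iff_tendsto_slope.mp hderiv
  have h2 : ∀ᶠ z in nhdsWithin (0:ℝ) {(0:ℝ)}ᶜ, slope S 0 z ∈ Set.Ioo (1/2 : ℝ) (3/2) :=
    h1 (Ioo_mem_nhds (by norm_num) (by norm_num))
  rw [eventually_nhdsWithin_iff, Metric.eventually_nhds_iff] at h2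
  obtain ⟨δ, hδpos, hδ⟩ := h2
  set δ' : ℝ := min (δ/2) 1 with hδ'
  have hδ'pos : 0 < δ' := lt_min (by linarith) one_pos
  have hδ'le1 : δ' ≤ 1 := min_le_right _ _
  -- near-zero bound
  have hnear : ∀ s : ℝ, -δ' ≤ s → s < 0 → 1 - |S s| ≥ -s/2 := by
    intro s hs1 hs2
    have hsδ : dist s 0 < δ := by
      rw [Real.dist_eq, sub_zero, abs_of_neg hs2]
      have : δ' ≤ δ/2 := min_le_left _ _
      linarith
    have hslope := hδ hsδ (by simpa using hs2.ne)
    rw [slope_def_field, hS0] at hslope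
    have h3 : (S s - 1)/(s - 0) < 3/2 := hslope.2
    have h4 : (1:ℝ)/2 < (S s - 1)/(s - 0) := hslope.1
    rw [sub_zero] at h3 h4
    have hSub : S s - 1 > (3/2) * s := by
      have := (div_lt_iff_of_neg hs2).mp h3; linarith
    have hSlb : S s - 1 < (1/2) * s := by
      have := (lt_div_iff_of_neg hs2).mp h4; linarith
    have hb1 : S s ≤ 1 + s/2 := by linarith
    have hb2 : S s ≥ 1 + 3*s/2 := by linarith
    have habs : |S s| ≤ 1 + s/2 := by
      rw [abs_le]
      constructor
      · nlinarith [hδ'le1, hs1]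
      · exact hb1
    linarith
  -- compact part
  set ε : ℝ := min δ' (8*lam) with hε
  have hεpos : 0 < ε := lt_min hδ'pos (by linarith)
  have hεle : ε ≤ 8*lam := min_le_right _ _
  set A : Set ℝ := Set.Icc (-(8*lam)) (-ε) with hA
  have hAsub : A ⊆ Set.Icc (-(8*lam)) 0 := Set.Icc_subset_Icc le_rfl (by linarith)
  have hAne : A.Nonempty := ⟨-(8*lam), by constructor <;> [skip; linarith] <;> exact le_rfl⟩
  have hgcont : ContinuousOn (fun s => 1 - |S s|) A :=
    continuousOn_const.sub (hcont.mono hAsub).abs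
  obtain ⟨s₀, hs₀A, hmin⟩ := (isCompact_Icc).exists_isMinOn hAne hgcont
  have hs₀Ico : s₀ ∈ Set.Ico (-(8*lam)) 0 := ⟨hs₀A.1, by have := hs₀A.2; linarith⟩
  have hm : 0 < 1 - |S s₀| := by linarith [hSlt s₀ hs₀Ico]
  refine ⟨min (1/2) ((1 - |S s₀|)/(8*lam)), lt_min (by norm_num) (by positivity), ?_⟩
  intro s hs
  rcases le_or_gt s (-ε) with hcase | hcase
  · have hsA : s ∈ A := ⟨hs.1, hcase⟩
    have h5 : 1 - |S s₀| ≤ 1 - |S s| := hmin hsA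
    have h6 : min (1/2) ((1 - |S s₀|)/(8*lam)) * (-s) ≤ ((1 - |S s₀|)/(8*lam)) * (8*lam) := by
      apply mul_le_mul (min_le_right _ _) (by linarith [hs.1]) (by linarith [hs.2]) (by positivity)
    rw [div_mul_cancel₀] at h6
    · linarith
    · positivity
  · rcases eq_or_lt_of_le hs.2 with h0 | h0
    · rw [h0]; simp [hS0]
    · have hsδ' : -δ' ≤ s := by
        have : ε ≤ δ' := min_le_left _ _
        linarith
      have := hnear s hsδ' h0
      have h7 : min (1/2) ((1 - |S s₀|)/(8*lam)) * (-s) ≤ (1/2) * (-s) := by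
        apply mul_le_mul_of_nonneg_right (min_le_left _ _) (by linarith)
      linarith

set_option maxHeartbeats 1000000 in
/-- 2D bound: `Σ_{k∈{1,…,K−1}²} 1/(1 − |S(s_k)|) ≤ C Δt⁻¹ |log(λ⁻¹Δt)|`
where `Δt = λ/K²` and `s_k = −4ΔtK²(sin²(πk₁/(2K)) + sin²(πk₂/(2K)))`. -/
theorem series_bound_2d (lam : ℝ) (hlam : 0 < lam) (S : ℝ → ℝ)
    (hcont : ContinuousOn S (Set.Icc (-(8 * lam)) 0))
    (hS0 : S 0 = 1)
    (hSlt : ∀ z ∈ Set.Ico (-(8 * lam)) 0, |S z| < 1)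
    (hderiv : HasDerivAt S 1 0) :
    ∃ C > 0, ∀ K : ℕ, 2 ≤ K →
      ∑ k₁ ∈ Finset.Icc 1 (K - 1), ∑ k₂ ∈ Finset.Icc 1 (K - 1),
          1 / (1 - |S (-(4 * (lam / (K : ℝ) ^ 2) * (K : ℝ) ^ 2
            * (Real.sin (π * (k₁ : ℝ) / (2 * K)) ^ 2
              + Real.sin (π * (k₂ : ℝ) / (2 * K)) ^ 2)))|)
        ≤ C * (lam / (K : ℝ) ^ 2)⁻¹ * |Real.log (lam⁻¹ * (lam / (K : ℝ) ^ 2))| := by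
  obtain ⟨c, hc, hcb⟩ := stab_bound lam hlam S hcont hS0 hSlt hderiv
  -- general term bound
  have haux : ∀ σ τ : ℝ, 0 < τ → τ ≤ σ → σ ≤ 2 →
      1 / (1 - |S (-(4 * lam * σ))|) ≤ 1 / (c * (4 * lam * τ)) := by
    intro σ τ hτ hτσ hσ2
    have hsmem : -(4 * lam * σ) ∈ Set.Icc (-(8*lam)) 0 := by
      constructor <;> nlinarith
    have hsIco : -(4 * lam * σ) ∈ Set.Ico (-(8*lam)) 0 := ⟨hsmem.1, by nlinarith⟩
    have hpos : 0 < 1 - |S (-(4 * lam * σ))| := by linarith [hSlt _ hsIco]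
    have hlow : c * (4 * lam * τ) ≤ 1 - |S (-(4 * lam * σ))| := by
      have h1 := hcb _ hsmem
      rw [neg_neg] at h1
      nlinarith
    exact one_div_le_one_div_of_le (by positivity) hlow
  refine ⟨1/c, by positivity, ?_⟩
  intro K hK
  have hK2 : (2:ℝ) ≤ (K:ℝ) := by exact_mod_cast hK
  have hK0 : (0:ℝ) < (K:ℝ) := by linarith
  have hKsq : (0:ℝ) < (K:ℝ)^2 := by positivity
  have hcoef : 4 * (lam / (K:ℝ)^2) * (K:ℝ)^2 = 4 * lam := by field_simp
  -- sin lower bound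
  have hsin : ∀ k ∈ Finset.Icc 1 (K-1),
      ((k:ℝ)/K)^2 ≤ Real.sin (π * (k:ℝ) / (2*K)) ^ 2 ∧ Real.sin (π * (k:ℝ) / (2*K)) ^ 2 ≤ 1 := by
    intro k hk
    rw [Finset.mem_Icc] at hk
    have hk1 : (1:ℝ) ≤ (k:ℝ) := by exact_mod_cast hk.1
    have hkK : (k:ℝ) ≤ (K:ℝ) := by
      have : k ≤ K := by omega
      exact_mod_cast this
    have hx0 : 0 ≤ π * (k:ℝ) / (2*K) := by positivity
    have hx2 : π * (k:ℝ) / (2*K) ≤ π/2 := by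
      rw [div_le_div_iff₀ (by positivity) (by norm_num)]
      nlinarith [Real.pi_pos]
    have hms := Real.mul_le_sin hx0 hx2
    have heq : 2/π * (π * (k:ℝ) / (2*K)) = (k:ℝ)/K := by
      field_simp
    constructor
    · apply pow_le_pow_left₀ (by positivity)
      rw [← heq]; exact hms
    · rw [sq_le_one_iff_abs_le_one, abs_le]
      exact ⟨neg_one_le_sin _, sin_le_one _⟩
  -- sum bound
  have hsum : ∑ k₁ ∈ Finset.Icc 1 (K - 1), ∑ k₂ ∈ Finset.Icc 1 (K - 1),
      1 / (1 - |S (-(4 * (lam / (K : ℝ) ^ 2) * (K : ℝ) ^ 2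
            * (Real.sin (π * (k₁ : ℝ) / (2 * K)) ^ 2
              + Real.sin (π * (k₂ : ℝ) / (2 * K)) ^ 2)))|)
      ≤ ((K:ℝ)^2/(4*lam*c)) * ∑ k₁ ∈ Finset.Icc 1 (K-1), (2/(k₁:ℝ)) := by
    rw [Finset.mul_sum]
    apply Finset.sum_le_sum
    intro k₁ hk₁
    have hk₁1 : (1:ℝ) ≤ (k₁:ℝ) := by
      rw [Finset.mem_Icc] at hk₁; exact_mod_cast hk₁.1
    have step1 : ∀ k₂ ∈ Finset.Icc 1 (K - 1),
        1 / (1 - |S (-(4 * (lam / (K : ℝ) ^ 2) * (K : ℝ) ^ 2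
            * (Real.sin (π * (k₁ : ℝ) / (2 * K)) ^ 2
              + Real.sin (π * (k₂ : ℝ) / (2 * K)) ^ 2)))|)
        ≤ ((K:ℝ)^2/(4*lam*c)) * (1/((k₁:ℝ)^2 + (k₂:ℝ)^2)) := by
      intro k₂ hk₂
      have hk₂1 : (1:ℝ) ≤ (k₂:ℝ) := by
        rw [Finset.mem_Icc] at hk₂; exact_mod_cast hk₂.1
      obtain ⟨hs1, hs1b⟩ := hsin k₁ hk₁
      obtain ⟨hs2, hs2b⟩ := hsin k₂ hk₂
      have hrw : -(4 * (lam / (K : ℝ) ^ 2) * (K : ℝ) ^ 2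
            * (Real.sin (π * (k₁ : ℝ) / (2 * K)) ^ 2
              + Real.sin (π * (k₂ : ℝ) / (2 * K)) ^ 2))
          = -(4 * lam * (Real.sin (π * (k₁ : ℝ) / (2 * K)) ^ 2
              + Real.sin (π * (k₂ : ℝ) / (2 * K)) ^ 2)) := by
        rw [hcoef]
      rw [hrw]
      have hτσ : ((k₁:ℝ)^2 + (k₂:ℝ)^2)/(K:ℝ)^2
          ≤ Real.sin (π * (k₁ : ℝ) / (2 * K)) ^ 2 + Real.sin (π * (k₂ : ℝ) / (2 * K)) ^ 2 := by
        have : ((k₁:ℝ)/K)^2 + ((k₂:ℝ)/K)^2 = ((k₁:ℝ)^2 + (k₂:ℝ)^2)/(K:ℝ)^2 := by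
          field_simp
        linarith
      have h := haux _ (((k₁:ℝ)^2 + (k₂:ℝ)^2)/(K:ℝ)^2) (by positivity) hτσ (by linarith)
      refine h.trans (le_of_eq ?_)
      field_simp
    calc ∑ k₂ ∈ Finset.Icc 1 (K - 1),
        1 / (1 - |S (-(4 * (lam / (K : ℝ) ^ 2) * (K : ℝ) ^ 2
            * (Real.sin (π * (k₁ : ℝ) / (2 * K)) ^ 2
              + Real.sin (π * (k₂ : ℝ) / (2 * K)) ^ 2)))|)
        ≤ ∑ k₂ ∈ Finset.Icc 1 (K - 1), ((K:ℝ)^2/(4*lam*c)) * (1/((k₁:ℝ)^2 + (k₂:ℝ)^2)) :=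
          Finset.sum_le_sum step1
      _ = ((K:ℝ)^2/(4*lam*c)) * ∑ k₂ ∈ Finset.Icc 1 (K-1), (1/((k₁:ℝ)^2 + (k₂:ℝ)^2)) := by
          rw [Finset.mul_sum]
      _ ≤ ((K:ℝ)^2/(4*lam*c)) * (2/(k₁:ℝ)) := by
          apply mul_le_mul_of_nonneg_left _ (by positivity)
          have h1 := inner_sum_le (k₁:ℝ) hk₁1 (K-1)
          have h2 : (0:ℝ) ≤ 2/((k₁:ℝ) + ((K-1:ℕ):ℝ)) := by positivity
          linarith
  -- harmonic bound
  have hN : 1 ≤ K - 1 := by omega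
  have hharm : ∑ k₁ ∈ Finset.Icc 1 (K-1), (2/(k₁:ℝ)) ≤ 2 * (1 + Real.log K) := by
    have h1 : ∑ k₁ ∈ Finset.Icc 1 (K-1), (2/(k₁:ℝ))
        = 2 * ∑ k₁ ∈ Finset.Icc 1 (K-1), (1/(k₁:ℝ)) := by
      rw [Finset.mul_sum]; congr 1; ext k; ring
    rw [h1]
    have h2 := harmonic_le_log (K-1) hN
    have h3 : Real.log ((K-1:ℕ):ℝ) ≤ Real.log K := by
      apply Real.log_le_log (by exact_mod_cast hN)
      have : K - 1 ≤ K := by omega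
      exact_mod_cast this
    linarith
  have hlogK : Real.log 2 ≤ Real.log K := Real.log_le_log (by norm_num) hK2
  have hlog2 : (0.6931:ℝ) < Real.log 2 := by
    have := Real.log_two_gt_d9; linarith
  have hlogpos : (0:ℝ) < Real.log K := by linarith
  -- RHS simplification
  have hrhs : (1/c) * (lam / (K : ℝ) ^ 2)⁻¹ * |Real.log (lam⁻¹ * (lam / (K : ℝ) ^ 2))|
      = (1/c) * ((K:ℝ)^2/lam) * (2 * Real.log K) := by
    have e1 : lam⁻¹ * (lam / (K:ℝ)^2) = ((K:ℝ)^2)⁻¹ := by field_simp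
    have e2 : Real.log (((K:ℝ)^2)⁻¹) = -(2 * Real.log K) := by
      rw [Real.log_inv, Real.log_pow]; push_cast; ring
    rw [e1, e2, abs_neg, abs_of_pos (by linarith), inv_div]
  rw [hrhs]
  have hfinal : ((K:ℝ)^2/(4*lam*c)) * (2 * (1 + Real.log K))
      ≤ (1/c) * ((K:ℝ)^2/lam) * (2 * Real.log K) := by
    have e1 : ((K:ℝ)^2/(4*lam*c)) * (2 * (1 + Real.log K))
        = ((K:ℝ)^2/(lam*c)) * ((1 + Real.log K)/2) := by ring
    have e2 : (1/c) * ((K:ℝ)^2/lam) * (2 * Real.log K)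
        = ((K:ℝ)^2/(lam*c)) * (2 * Real.log K) := by ring
    rw [e1, e2]
    apply mul_le_mul_of_nonneg_left _ (by positivity)
    linarith
  calc _ ≤ ((K:ℝ)^2/(4*lam*c)) * ∑ k₁ ∈ Finset.Icc 1 (K-1), (2/(k₁:ℝ)) := hsum
    _ ≤ ((K:ℝ)^2/(4*lam*c)) * (2 * (1 + Real.log K)) := by
        apply mul_le_mul_of_nonneg_left hharm (by positivity)
    _ ≤ _ := hfinal
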